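/- Let H be a real Hilbert space, C a nonempty closed convex subset of H, and S : C → C a nonexpansive mapping. Let f : C × C → ℝ satisfy: f(x, x) = 0 and f(x, y) + f(y, x) ≤ 0 for all x, y ∈ C; f is Lipschitz-type continuous on C with constants c₁, c₂ > 0; and f(x, ·) is convex and subdifferentiable on C for every x ∈ C. Let λ > 0, k > 0, α_n ∈ [0, 1]. Let x_{n−1}, x_n ∈ H, y_{n−1}, y_n ∈ C with y_n a minimizer over C of y ↦ λ f(y_{n−1}, y) + (1/2)‖x_{n−1} − y‖²; let y_{n+1} ∈ C be a minimizer over C of y ↦ λ f(y_n, y) + (1/2)‖x_n − y‖²; set z_{n+1} = α_n y_{n+1} + (1 − α_n) S y_{n+1}; set ε_n = k‖x_n − x_{n−1}‖² + 2λc₁‖y_n − y_{n−1}‖² − (1 − 1/k − 2λc₂)‖y_{n+1} − y_n‖²; let w_{n+1} = y_{n+1} if ‖y_{n+1} − x_n‖ ≥ ‖z_{n+1} − x_n‖ and w_{n+1} = z_{n+1} otherwise. Then for every x* ∈ C with f(x*, y) ≥ 0 for all y ∈ C and S x* = x*, one has ‖w_{n+1} − x*‖² ≤ ‖x_n − x*‖²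 + ε_n. -/

import Mathlib

open scoped RealInnerProductSpace

/-- Variational inequality satisfied by the minimizer of `λ g(·) + ½‖x-·‖²` over `C`. -/
lemma vi_aux {H : Type*} [NormedAddCommGroup H] [InnerProductSpace ℝ H]
    {C : Set H} (hCconv : Convex ℝ C) {g : H → ℝ} (hg : ConvexOn ℝ C g)
    {lam : ℝ} (hlam : 0 < lam) (x p : H) (hp : p ∈ C)
    (hmin : ∀ y ∈ C, lam * g p + (1 / 2) * ‖x - p‖ ^ 2 ≤
      lam * g y + (1 / 2) * ‖x - y‖ ^ 2) :
    ∀ y ∈ C, ⟪x - p, y - p⟫ ≤ lam * (g y - g p) := by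
  intro y hy
  have hd : (0:ℝ) ≤ ‖y - p‖ ^ 2 := by positivity
  set d : ℝ := ‖y - p‖ ^ 2 with hdd
  refine le_of_forall_pos_le_add ?_
  intro ε hε
  set t : ℝ := min 1 (2 * ε / (d + 1)) with htdef
  have ht0 : 0 < t := lt_min one_pos (by positivity)
  have ht1 : t ≤ 1 := min_le_left _ _
  have hytC : p + t • (y - p) ∈ C := by
    have : (1 - t) • p + t • y ∈ C :=
      hCconv hp hy (by linarith) ht0.le (by ring)
    have heq : (1 - t) • p + t • y = p + t • (y - p) := by module
    rwa [heq] at this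
  have hmin' := hmin _ hytC
  have hnorm : ‖x - (p + t • (y - p))‖ ^ 2
      = ‖x - p‖ ^ 2 - 2 * t * ⟪x - p, y - p⟫ + t ^ 2 * d := by
    rw [show x - (p + t • (y - p)) = (x - p) - t • (y - p) from by module,
      norm_sub_sq_real, real_inner_smul_right, norm_smul, Real.norm_eq_abs,
      abs_of_pos ht0, hdd]
    ring
  have hgyt : g ((1 - t) • p + t • y) ≤ (1 - t) * g p + t * g y :=
    hg.2 hp hy (by linarith) ht0.le (by ring)
  rw [show (1 - t) • p + t • y = p + t • (y - p) from by module] at hgyt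
  have hgyt' : lam * g (p + t • (y - p)) ≤ lam * ((1 - t) * g p + t * g y) :=
    mul_le_mul_of_nonneg_left hgyt hlam.le
  rw [hnorm] at hmin'
  have hstep : t * ⟪x - p, y - p⟫ ≤ t * (lam * (g y - g p) + (t / 2) * d) := by
    nlinarith [hmin', hgyt']
  have hmain : ⟪x - p, y - p⟫ ≤ lam * (g y - g p) + (t / 2) * d :=
    le_of_mul_le_mul_left hstep ht0
  have htd : t * (d + 1) ≤ 2 * ε := by
    have h2 : t ≤ 2 * ε / (d + 1) := min_le_right _ _
    exact (le_div_iff₀ (by positivity)).mp h2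
  nlinarith [ht0, hd]

theorem hybrid_key_estimate
    {H : Type*} [NormedAddCommGroup H] [InnerProductSpace ℝ H]
    (C : Set H) (hCne : C.Nonempty) (hCclosed : IsClosed C) (hCconv : Convex ℝ C)
    (S : H → H) (hSC : ∀ x ∈ C, S x ∈ C)
    (hS : ∀ x ∈ C, ∀ y ∈ C, ‖S x - S y‖ ≤ ‖x - y‖)
    (f : H → H → ℝ) (c1 c2 : ℝ) (hc1 : 0 < c1) (hc2 : 0 < c2)
    (hrefl : ∀ x ∈ C, f x x = 0)
    (hmono : ∀ x ∈ C, ∀ y ∈ C, f x y + f y x ≤ 0)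
    (hlip : ∀ x ∈ C, ∀ y ∈ C, ∀ z ∈ C,
      f x y + f y z ≥ f x z - c1 * ‖x - y‖ ^ 2 - c2 * ‖y - z‖ ^ 2)
    (hconv : ∀ x ∈ C, ConvexOn ℝ C (f x))
    (hsub : ∀ x ∈ C, ∀ p ∈ C, ∃ w : H, ∀ y ∈ C, f x y - f x p ≥ ⟪w, y - p⟫)
    (lam k : ℝ) (hlam : 0 < lam) (hk : 0 < k)
    (αn : ℝ) (hαn : αn ∈ Set.Icc (0 : ℝ) 1)
    (xm xn : H) (ym yn ynp : H) (hym : ym ∈ C) (hyn : yn ∈ C) (hynp : ynp ∈ C)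
    (hynmin : ∀ y ∈ C, lam * f ym yn + (1 / 2) * ‖xm - yn‖ ^ 2 ≤
      lam * f ym y + (1 / 2) * ‖xm - y‖ ^ 2)
    (hynpmin : ∀ y ∈ C, lam * f yn ynp + (1 / 2) * ‖xn - ynp‖ ^ 2 ≤
      lam * f yn y + (1 / 2) * ‖xn - y‖ ^ 2)
    (znp : H) (hznp : znp = αn • ynp + (1 - αn) • S ynp)
    (εn : ℝ) (hεn : εn = k * ‖xn - xm‖ ^ 2 + 2 * lam * c1 * ‖yn - ym‖ ^ 2
      - (1 - 1 / k - 2 * lam * c2) * ‖ynp - yn‖ ^ 2)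
    (wnp : H)
    (hw1 : ‖ynp - xn‖ ≥ ‖znp - xn‖ → wnp = ynp)
    (hw2 : ‖ynp - xn‖ < ‖znp - xn‖ → wnp = znp)
    (xs : H) (hxsC : xs ∈ C) (hxsEP : ∀ y ∈ C, 0 ≤ f xs y) (hxsF : S xs = xs) :
    ‖wnp - xs‖ ^ 2 ≤ ‖xn - xs‖ ^ 2 + εn := by
  -- Variational inequalities for the two minimizers
  have vi1 : ∀ y ∈ C, ⟪xn - ynp, y - ynp⟫ ≤ lam * (f yn y - f yn ynp) :=
    vi_aux hCconv (hconv yn hyn) hlam xn ynp hynp hynpmin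
  have vi2 : ∀ y ∈ C, ⟪xm - yn, y - yn⟫ ≤ lam * (f ym y - f ym yn) :=
    vi_aux hCconv (hconv ym hym) hlam xm yn hyn hynmin
  -- f yn xs ≤ 0
  have hfynxs : f yn xs ≤ 0 := by
    have h1 := hmono xs hxsC yn hyn
    have h2 := hxsEP yn hyn
    linarith
  have h4 : ⟪xn - ynp, xs - ynp⟫ ≤ lam * (f yn xs - f yn ynp) := vi1 xs hxsC
  have h5 : ⟪xm - yn, ynp - yn⟫ ≤ lam * (f ym ynp - f ym yn) := vi2 ynp hynp
  have hlipS := hlip ym hym yn hyn ynp hynp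
  -- multiply the Lipschitz estimate by lam
  have h5' : lam * (f ym ynp - f ym yn)
      ≤ lam * (f yn ynp + c1 * ‖ym - yn‖ ^ 2 + c2 * ‖yn - ynp‖ ^ 2) :=
    mul_le_mul_of_nonneg_left (by linarith) hlam.le
  have hfynxs' : lam * f yn xs ≤ 0 := mul_nonpos_of_nonneg_of_nonpos hlam.le hfynxs
  -- Identities
  have id1 : ‖ynp - xs‖ ^ 2
      = ‖xn - xs‖ ^ 2 - ‖xn - ynp‖ ^ 2 + 2 * ⟪xn - ynp, xs - ynp⟫ := by
    have e : ‖xn - xs‖ ^ 2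
        = ‖xn - ynp‖ ^ 2 - 2 * ⟪xn - ynp, xs - ynp⟫ + ‖xs - ynp‖ ^ 2 := by
      rw [show xn - xs = (xn - ynp) - (xs - ynp) from by abel]
      exact norm_sub_sq_real _ _
    have e2 : ‖ynp - xs‖ = ‖xs - ynp‖ := norm_sub_rev _ _
    rw [e2]; linarith
  have id2 : ‖xn - ynp‖ ^ 2
      = ‖xn - yn‖ ^ 2 + ‖yn - ynp‖ ^ 2 + 2 * ⟪xn - yn, yn - ynp⟫ := by
    rw [show xn - ynp = (xn - yn) + (yn - ynp) from by abel, norm_add_sq_real]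
    ring
  have id3 : ⟪xm - yn, ynp - yn⟫ = ⟪xm - xn, ynp - yn⟫ + ⟪xn - yn, ynp - yn⟫ := by
    rw [show xm - yn = (xm - xn) + (xn - yn) from by abel, inner_add_left]
  have id4 : ⟪xn - yn, ynp - yn⟫ = - ⟪xn - yn, yn - ynp⟫ := by
    rw [show ynp - yn = -(yn - ynp) from by abel, inner_neg_right]
  have id5 : ⟪xm - xn, ynp - yn⟫ = - ⟪xm - xn, yn - ynp⟫ := by
    rw [show ynp - yn = -(yn - ynp) from by abel, inner_neg_right]
  -- Young's inequality
  have young : 2 * ⟪xm - xn, yn - ynp⟫ ≤ k * ‖xn - xm‖ ^ 2 + (1 / k) * ‖yn - ynp‖ ^ 2 := by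
    have cs : ⟪xm - xn, yn - ynp⟫ ≤ ‖xm - xn‖ * ‖yn - ynp‖ := real_inner_le_norm _ _
    have e1 : ‖xn - xm‖ = ‖xm - xn‖ := norm_sub_rev _ _
    rw [e1]
    have hkk : 2 * (‖xm - xn‖ * ‖yn - ynp‖)
        ≤ k * ‖xm - xn‖ ^ 2 + (1 / k) * ‖yn - ynp‖ ^ 2 := by
      rw [← sub_nonneg]
      have heq : k * ‖xm - xn‖ ^ 2 + (1 / k) * ‖yn - ynp‖ ^ 2
          - 2 * (‖xm - xn‖ * ‖yn - ynp‖)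
          = (k * ‖xm - xn‖ - ‖yn - ynp‖) ^ 2 / k := by
        field_simp; ring
      rw [heq]; positivity
    linarith
  have e2 : ‖ynp - yn‖ ^ 2 = ‖yn - ynp‖ ^ 2 := by rw [norm_sub_rev]
  have e3 : ‖yn - ym‖ ^ 2 = ‖ym - yn‖ ^ 2 := by rw [norm_sub_rev]
  have hxy : (0:ℝ) ≤ ‖xn - yn‖ ^ 2 := by positivity
  -- Key estimate for y_{n+1}
  have key : ‖ynp - xs‖ ^ 2 ≤ ‖xn - xs‖ ^ 2 + εn := by
    rw [hεn, e2, e3]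
    linarith [h4, h5, h5', hfynxs', young]
  -- z_{n+1} estimate
  have hz : ‖znp - xs‖ ≤ ‖ynp - xs‖ := by
    have hα0 : 0 ≤ αn := hαn.1
    have hα1 : αn ≤ 1 := hαn.2
    have hSx : ‖S ynp - xs‖ ≤ ‖ynp - xs‖ := by
      have := hS ynp hynp xs hxsC
      rwa [hxsF] at this
    have hdecomp : znp - xs = αn • (ynp - xs) + (1 - αn) • (S ynp - xs) := by
      rw [hznp]; module
    calc ‖znp - xs‖ = ‖αn • (ynp - xs) + (1 - αn) • (S ynp - xs)‖ := by rw [hdecomp]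
      _ ≤ ‖αn • (ynp - xs)‖ + ‖(1 - αn) • (S ynp - xs)‖ := norm_add_le _ _
      _ = αn * ‖ynp - xs‖ + (1 - αn) * ‖S ynp - xs‖ := by
          rw [norm_smul, norm_smul, Real.norm_eq_abs, Real.norm_eq_abs,
            abs_of_nonneg hα0, abs_of_nonneg (by linarith : (0:ℝ) ≤ 1 - αn)]
      _ ≤ αn * ‖ynp - xs‖ + (1 - αn) * ‖ynp - xs‖ :=
          add_le_add_right (mul_le_mul_of_nonneg_left hSx (by linarith)) _
      _ = ‖ynp - xs‖ := by ring
  have hz2 : ‖znp - xs‖ ^ 2 ≤ ‖ynp - xs‖ ^ 2 :=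
    pow_le_pow_left₀ (norm_nonneg _) hz 2
  by_cases hcase : ‖ynp - xn‖ ≥ ‖znp - xn‖
  · rw [hw1 hcase]; exact key
  · rw [hw2 (lt_of_not_ge hcase)]; linarith
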